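/- Let v_β solve the IVP (σ²/2) v'(x) = β − h x + φ(p − v(x)), v(0) = 0, where φ(y) ≥ θ_0 y for all y with θ_0 < 0. Then v_β(x) ≥ (−β/θ_0 − p − hσ²/(2θ_0²)) e^{−2θ_0 x/σ²} + (β/θ_0 + p − hx/θ_0 + hσ²/(2θ_0²)) for all x ≥ 0. In particular, if β > p|θ_0| + hσ²/(2|θ_0|), then v_β(x) → ∞ as x → ∞. -/

import Mathlib

/-- If `v_β` solves the IVP `(σ²/2) v' x = β − h x + φ(p − v x)`, `v 0 = 0`,
with `φ(y) ≥ θ₀ y` and `θ₀ < 0`, then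
`v_β x ≥ (−β/θ₀ − p − hσ²/(2θ₀²)) e^{−2θ₀x/σ²} + (β/θ₀ + p − hx/θ₀ + hσ²/(2θ₀²))` for `x ≥ 0`;
in particular if `β > p|θ₀| + hσ²/(2|θ₀|)` then `v_β x → ∞`. -/
theorem stmt12 (σ h p β θ₀ : ℝ) (hσ : 0 < σ) (hh : 0 < h) (hp : 0 < p) (hθ₀ : θ₀ < 0)
    (φ : ℝ → ℝ) (hφ : Continuous φ) (hφlb : ∀ y : ℝ, θ₀ * y ≤ φ y)
    (v v' : ℝ → ℝ)
    (hderiv : ∀ x : ℝ, 0 ≤ x → HasDerivAt v (v' x) x)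
    (hode : ∀ x : ℝ, 0 ≤ x → σ ^ 2 / 2 * v' x = β - h * x + φ (p - v x))
    (hinit : v 0 = 0) :
    (∀ x : ℝ, 0 ≤ x →
      (-(β / θ₀) - p - h * σ ^ 2 / (2 * θ₀ ^ 2)) * Real.exp (-(2 * θ₀ * x) / σ ^ 2)
        + (β / θ₀ + p - h * x / θ₀ + h * σ ^ 2 / (2 * θ₀ ^ 2)) ≤ v x) ∧
    (β > p * |θ₀| + h * σ ^ 2 / (2 * |θ₀|) →
      Filter.Tendsto v Filter.atTop Filter.atTop) := by
  have hσ2 : (0:ℝ) < σ ^ 2 := by positivity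
  have hθne : θ₀ ≠ 0 := ne_of_lt hθ₀
  set c : ℝ := -(2 * θ₀) / σ ^ 2 with hc
  have hcpos : 0 < c := by
    apply div_pos (by linarith) hσ2
  set A : ℝ := -(β / θ₀) - p - h * σ ^ 2 / (2 * θ₀ ^ 2) with hA
  set g : ℝ → ℝ :=
    fun x => A * Real.exp (c * x) + (β / θ₀ + p - h * x / θ₀ + h * σ ^ 2 / (2 * θ₀ ^ 2))
    with hg
  have hg0 : g 0 = 0 := by
    simp only [hg, hA, mul_zero, Real.exp_zero, mul_one, zero_div]
    ring
  have hgderiv : ∀ x : ℝ, HasDerivAt g (A * c * Real.exp (c * x) - h / θ₀) x := by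
    intro x
    have h1 : HasDerivAt (fun x : ℝ => c * x) c x := by
      simpa using (hasDerivAt_id x).const_mul c
    have h2 : HasDerivAt (fun x : ℝ => A * Real.exp (c * x)) (A * (c * Real.exp (c * x))) x := by
      have := (Real.hasDerivAt_exp (c * x)).comp x h1
      simpa [mul_comm] using this.const_mul A
    have h3 : HasDerivAt (fun x : ℝ => β / θ₀ + p - h * x / θ₀ + h * σ ^ 2 / (2 * θ₀ ^ 2))
        (-(h / θ₀)) x := by
      have hlin : HasDerivAt (fun x : ℝ => h * x / θ₀) (h / θ₀) x := by
        have h4 : HasDerivAt (fun x : ℝ => h / θ₀ * x) (h / θ₀) x := by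
          simpa using (hasDerivAt_id x).const_mul (h / θ₀)
        have heq : (fun x : ℝ => h * x / θ₀) = fun x : ℝ => h / θ₀ * x := by
          funext y; ring
        rw [heq]; exact h4
      exact (hlin.const_sub (β / θ₀ + p)).add_const (h * σ ^ 2 / (2 * θ₀ ^ 2))
    have := h2.fun_add h3
    exact this.congr_deriv (by ring)
  -- key comparison : v x ≥ g x on [0,∞)
  set f : ℝ → ℝ := fun x => (v x - g x) * Real.exp (-(c * x)) with hf
  have hfd : ∀ x : ℝ, 0 ≤ x →
      HasDerivAt f ((v' x - (A * c * Real.exp (c * x) - h / θ₀)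
        - c * (v x - g x)) * Real.exp (-(c * x))) x := by
    intro x hx
    have h1 : HasDerivAt (fun x => v x - g x)
        (v' x - (A * c * Real.exp (c * x) - h / θ₀)) x := (hderiv x hx).sub (hgderiv x)
    have h2 : HasDerivAt (fun x : ℝ => Real.exp (-(c * x))) (-c * Real.exp (-(c * x))) x := by
      have hl : HasDerivAt (fun x : ℝ => -(c * x)) (-c) x := by
        simpa using (hasDerivAt_id x).const_mul (-c)
      convert hl.exp using 1; ring
    have := h1.fun_mul h2
    exact this.congr_deriv (by ring)
  have hfmono : MonotoneOn f (Set.Ici (0:ℝ)) := by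
    apply monotoneOn_of_deriv_nonneg (convex_Ici 0)
    · intro x hx
      exact ((hfd x hx).continuousAt).continuousWithinAt
    · intro x hx
      rw [interior_Ici] at hx
      exact (hfd x (le_of_lt hx)).differentiableAt.differentiableWithinAt
    · intro x hx
      rw [interior_Ici] at hx
      have hx0 : (0:ℝ) ≤ x := le_of_lt hx
      rw [(hfd x hx0).deriv]
      have hode' := hode x hx0
      have hv' : v' x = 2 * (β - h * x + φ (p - v x)) / σ ^ 2 := by
        field_simp at hode' ⊢
        linarith
      have hb := hφlb (p - v x)
      have hexp : (0:ℝ) < Real.exp (-(c * x)) := Real.exp_pos _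
      apply mul_nonneg _ (le_of_lt hexp)
      have hEid : v' x - (A * c * Real.exp (c * x) - h / θ₀) - c * (v x - g x)
          = 2 / σ ^ 2 * (φ (p - v x) - θ₀ * (p - v x)) := by
        rw [hv']
        simp only [hg, hc, hA]
        field_simp
        ring
      rw [hEid]
      apply mul_nonneg (by positivity)
      linarith
  have hkey : ∀ x : ℝ, 0 ≤ x → g x ≤ v x := by
    intro x hx
    have h0 : f 0 = 0 := by simp [hf, hinit, hg0]
    have hmx := hfmono (Set.self_mem_Ici) (Set.mem_Ici.mpr hx) hx
    rw [h0] at hmx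
    simp only [hf] at hmx
    have hexp : (0:ℝ) < Real.exp (-(c * x)) := Real.exp_pos _
    by_contra hlt
    push_neg at hlt
    nlinarith [mul_pos (sub_pos.mpr hlt) hexp]
  constructor
  · intro x hx
    have := hkey x hx
    have hE : Real.exp (-(2 * θ₀ * x) / σ ^ 2) = Real.exp (c * x) := by
      congr 1; rw [hc]; ring
    rw [hE]
    exact this
  · intro hβ
    clear_value f g A c
    have habs : |θ₀| = -θ₀ := abs_of_neg hθ₀
    rw [habs] at hβ
    have h2θ : (0:ℝ) < 2 * -θ₀ := by linarith
    have hApos : 0 ≤ A := by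
      have hAeq : A = (-2 * θ₀ * β - 2 * p * θ₀ ^ 2 - h * σ ^ 2) / (2 * θ₀ ^ 2) := by
        rw [hA]; field_simp
      rw [hAeq]
      apply div_nonneg _ (by positivity)
      have hd : h * σ ^ 2 < (β - p * -θ₀) * (2 * -θ₀) := by
        rw [← div_lt_iff₀ h2θ]
        linarith
      nlinarith [hd]
    have hlin : ∀ x : ℝ, 0 ≤ x → -(h / θ₀) * x ≤ v x := by
      intro x hx
      have hg' := hkey x hx
      simp only [hg] at hg'
      have he : (1:ℝ) ≤ Real.exp (c * x) := Real.one_le_exp (by positivity)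
      have hAe : A ≤ A * Real.exp (c * x) := le_mul_of_one_le_right hApos he
      have hzero : A + (β / θ₀ + p + h * σ ^ 2 / (2 * θ₀ ^ 2)) = 0 := by
        rw [hA]; ring
      have hrw : -(h / θ₀) * x = -(h * x / θ₀) := by ring
      rw [hrw]
      have hstep : A + (β / θ₀ + p - h * x / θ₀ + h * σ ^ 2 / (2 * θ₀ ^ 2)) ≤ v x := by
        calc A + (β / θ₀ + p - h * x / θ₀ + h * σ ^ 2 / (2 * θ₀ ^ 2))
            ≤ A * Real.exp (c * x) + (β / θ₀ + p - h * x / θ₀ + h * σ ^ 2 / (2 * θ₀ ^ 2)) := by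
              linarith [hAe]
          _ ≤ v x := hg'
      have hfin : A + (β / θ₀ + p - h * x / θ₀ + h * σ ^ 2 / (2 * θ₀ ^ 2))
          = -(h * x / θ₀) := by
        have : h * x / θ₀ = h * x / θ₀ := rfl
        linear_combination hzero
      linarith [hstep, hfin]
    have hcoef : (0:ℝ) < -(h / θ₀) := by
      have : h / θ₀ < 0 := div_neg_of_pos_of_neg hh hθ₀
      linarith
    apply Filter.tendsto_atTop_mono' _ _
      (Filter.Tendsto.const_mul_atTop hcoef Filter.tendsto_id)
    filter_upwards [Filter.eventually_ge_atTop (0:ℝ)] with x hx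
    exact hlin x hx
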